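/- For τ ∈ (0, 1/4), let a₁ < b₁ be the two real roots of q₁ and let D(z) = −2z⁶ + 3z³ + cz² − 3τ. Then: for 0 < τ < 1/12, D has no zeros in the open interval (a₁, b₁); for 1/12 < τ < 1/4, D has exactly one zero in (a₁, b₁); D(b₁) = 0 if and only if τ = 1/12; and D(a₁) ≠ 0 for all τ ∈ (0, 1/4). -/

import Mathlib

noncomputable section

/-- The constant `c = −(243(1−4τ)²/64)^{1/3}` (real cube root). -/
def ccf (τ : ℝ) : ℝ := -(243 * (1 - 4 * τ) ^ 2 / 64) ^ ((1 : ℝ) / 3)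

/-- `R(z) = 3z⁴ − 3z − c`. -/
def RR (τ : ℝ) (z : ℂ) : ℂ := 3 * z ^ 4 - 3 * z - (ccf τ : ℂ)

/-- `D(z) = −2z⁶ + 3z³ + cz² − 3τ`. -/
def DD (τ : ℝ) (z : ℂ) : ℂ :=
  -2 * z ^ 6 + 3 * z ^ 3 + (ccf τ : ℂ) * z ^ 2 - 3 * (τ : ℂ)

/-- The quartic `q₁`. -/
def q1 (τ : ℝ) (z : ℂ) : ℂ :=
  ((256 / (3 : ℝ) ^ ((5 : ℝ) / 3) * (1 - 4 * τ) ^ ((1 : ℝ) / 3) : ℝ) : ℂ) * z ^ 4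
    + (128 / 9 : ℂ) * z ^ 3
    + ((16 / (3 : ℝ) ^ ((1 : ℝ) / 3) * (1 - 4 * τ) ^ ((2 : ℝ) / 3) : ℝ) : ℂ) * z ^ 2
    - ((32 * (3 : ℝ) ^ ((1 : ℝ) / 3) * (1 - 4 * τ) ^ ((1 : ℝ) / 3) : ℝ) : ℂ) * z
    + ((16 * (1 - 8 * τ) : ℝ) : ℂ)

/-- The linear factor `q₂`. -/
def q2 (τ : ℝ) (z : ℂ) : ℂ :=
  (((3 : ℝ) ^ ((1 : ℝ) / 3) * (1 - 4 * τ) ^ ((1 : ℝ) / 3) : ℝ) : ℂ) * z - 1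

/-- The double point `b_* = (3(1−4τ))^{−1/3}`. -/
def bstar (τ : ℝ) : ℝ := (3 * (1 - 4 * τ)) ^ (-(1 : ℝ) / 3)

set_option maxHeartbeats 1600000
open Set Filter

lemma cube_inj {a b : ℝ} (h : a ^ 3 = b ^ 3) : a = b := by
  rcases mul_eq_zero.mp (show (a - b) * (a ^ 2 + a * b + b ^ 2) = 0 by linear_combination h) with h1 | h1
  · linarith [sub_eq_zero.mp h1]
  · have hb : b = 0 := by nlinarith [sq_nonneg (2 * a + b), sq_nonneg b]
    have ha : a = 0 := by nlinarith [sq_nonneg (a + 2 * b), sq_nonneg a]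
    rw [ha, hb]


lemma cube_pos_of_pos {w : ℝ} (h : 0 < w ^ 3) : 0 < w := by
  by_contra hc
  push_neg at hc
  nlinarith [sq_nonneg w]

lemma cube_neg_of_neg {w : ℝ} (h : w < 0) : w ^ 3 < 0 := by
  nlinarith [sq_nonneg w, mul_pos_of_neg_of_neg h h]

lemma Kpos {T : ℝ} (h : 8/3 < T) : 0 < 441*T^3 - 108*T^2 + 768*T + 1024 := by nlinarith

lemma Kneg {T : ℝ} (h : T < -16/9) : 441*T^3 - 108*T^2 + 768*T + 1024 < 0 := by
  nlinarith [mul_pos (show 0 < -(T + 16/9) by linarith)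
    (show 0 < 441*T^2 - 892*T + 21184/9 by nlinarith [sq_nonneg (21*T - 446/21)])]

lemma H3neg {T : ℝ} (h : T < -16/9) : 657*T^3 + 564*T^2 - 224*T + 128 < 0 := by
  nlinarith [mul_pos (show 0 < -(T + 16/9) by linarith)
    (show 0 < 657*T^2 - 604*T + 7648/9 by nlinarith [sq_nonneg (T - 302/657)])]

lemma neg_of_mul_pos_neg {a b : ℝ} (ha : 0 < a) (h : a * b < 0) : b < 0 := by
  by_contra hc
  push_neg at hc
  nlinarith [mul_nonneg (le_of_lt ha) hc]

lemma pos_of_mul_pos_pos {a b : ℝ} (ha : 0 < a) (h : 0 < a * b) : 0 < b := by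
  by_contra hc
  push_neg at hc
  nlinarith [mul_nonpos_of_nonneg_of_nonpos (le_of_lt ha) hc]

lemma eq_zero_of_mul_pos_zero {a b : ℝ} (ha : 0 < a) (h : a * b = 0) : b = 0 :=
  (mul_eq_zero.mp h).resolve_left (ne_of_gt ha)

/-- Core algebraic lemma via rational parametrization of the root curve. -/
lemma branch (u z : ℝ) (hu : 0 < u) (hw3 : u ^ 3 < 3)
    (hz : 16*u*z^4 + 8*z^3 + 3*u^2*z^2 - 18*u*z + 6*u^3 - 9 = 0) :
    (64*u*z^3 + 24*z^2 + 6*u^2*z - 18*u ≤ 0 → 0 < 8*z^6 - 12*z^3 + 3*u^2*z^2 + 3 - u^3) ∧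
    (0 ≤ 64*u*z^3 + 24*z^2 + 6*u^2*z - 18*u →
      (u^3 < 2 → 8*z^6 - 12*z^3 + 3*u^2*z^2 + 3 - u^3 < 0) ∧
      (u^3 = 2 → 8*z^6 - 12*z^3 + 3*u^2*z^2 + 3 - u^3 = 0) ∧
      (2 < u^3 → 0 < 8*z^6 - 12*z^3 + 3*u^2*z^2 + 3 - u^3 ∧ 8*z^4 - 6*z + u^2 ≤ 0)) := by
  by_cases hz0 : z = 0
  · subst hz0
    have hu32 : u ^ 3 = 3 / 2 := by nlinarith [hz]
    constructor
    · intro _; norm_num; nlinarith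
    · intro hP; exfalso; nlinarith
  by_cases hs9 : z ^ 3 = 9 / 10
  · -- vertical-line case
    have hzpos : 0 < z := by
      by_contra h
      push_neg at h
      nlinarith [sq_nonneg z]
    have hV : (u*z + 3/5)^2 * (u*z - 3/4) = 0 := by
      linear_combination (z^3/6) * hz - (1/6)*((16*u*z+8)*(z^3+9/10)+3*u^2*z^2-18*u*z-9) * hs9
    have hv34 : u * z = 3/4 := by
      rcases mul_eq_zero.mp hV with h | h
      · exfalso
        have h' : u * z + 3/5 = 0 := pow_eq_zero_iff two_ne_zero |>.mp h
        nlinarith [mul_pos hu hzpos]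
      · linarith [sub_eq_zero.mp h]
    have hz6 : z^6 = 81/100 := by nlinarith [hs9]
    have hu2z2 : u^2 * z^2 = 9/16 := by nlinarith [hv34]
    have hu3' : u ^ 3 = 15/32 := by
      have h3 : u^3 * z^3 = 27/64 := by nlinarith [hv34]
      nlinarith [hs9]
    have hDs : 8*z^6 - 12*z^3 + 3*u^2*z^2 + 3 - u^3 = -81/800 := by
      rw [hz6, hs9]; nlinarith [hu2z2, hu3']
    have hX : z * (64*u*z^3 + 24*z^2 + 6*u^2*z - 18*u) = 2187/40 := by
      linear_combination (64*z^3 + 6*u*z + 6*(3/4) - 18) * hv34 + 72 * hs9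
    have hPq : 0 < 64*u*z^3 + 24*z^2 + 6*u^2*z - 18*u := by nlinarith
    refine ⟨fun h => absurd h (not_le.mpr hPq), fun _ => ⟨fun _ => by rw [hDs]; norm_num,
      fun h => by rw [hu3'] at h; norm_num at h, fun h => by rw [hu3'] at h; norm_num at h⟩⟩
  -- main parametrized case
  have h910 : z ^ 3 - 9/10 ≠ 0 := sub_ne_zero_of_ne hs9
  set T : ℝ := (u*z + 3/5)/(z^3 - 9/10) with hT
  have hvt : u*z = T*(z^3 - 9/10) - 3/5 := by
    rw [hT, div_mul_cancel₀ _ h910]; ring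
  set D : ℝ := 6*T^2 + 3*T + 16 with hD
  have hDpos : 0 < D := by nlinarith [sq_nonneg (4*T + 1)]
  have key0 : (z^3 - 9/10)^2 * (10*T*D*(z^3 - 9/10) - (9*T - 4)^2) = 0 := by
    rw [hD]
    linear_combination 10*z^3*hz - 10*(16*(z^3)^2 + 3*z^3*(u*z + (T*(z^3-9/10) - 3/5)) - 18*z^3
      + 6*((u*z)^2 + (u*z)*(T*(z^3-9/10) - 3/5) + (T*(z^3-9/10) - 3/5)^2)) * hvt
  have key : 10*T*D*(z^3 - 9/10) = (9*T - 4)^2 := by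
    rcases mul_eq_zero.mp key0 with h | h
    · exact absurd (pow_eq_zero_iff two_ne_zero |>.mp h) h910
    · linarith [sub_eq_zero.mp h]
  have hT0 : T ≠ 0 := by
    intro h
    rw [h] at key
    norm_num at key
  have hT2 : 0 < T^2 := by positivity
  have hsE : 5*T*D*z^3 = (3*T + 2)^3 := by linear_combination (1/2) * key
  have hvE : 2*D*(u*z) = (3*T + 2)*(3*T - 8) := by
    linear_combination 2*D*hvt + (1/5)*key
  have h3T2 : 3*T + 2 ≠ 0 := by
    intro h
    have h1 : 5*T*D*z^3 = 0 := by rw [hsE, h]; ring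
    have h2 : z^3 = 0 := by
      have h5 : 5*T*D ≠ 0 := by
        intro hc
        rcases mul_eq_zero.mp hc with hc' | hc'
        · rcases mul_eq_zero.mp hc' with h5' | h5' <;> [norm_num at h5'; exact hT0 h5']
        · exact (ne_of_gt hDpos) hc'
      exact (mul_eq_zero.mp h1).resolve_left h5
    exact hz0 (pow_eq_zero_iff three_ne_zero |>.mp h2)
  have c1 : 8*D^3*(u*z)^3 = ((3*T + 2)*(3*T - 8))^3 := by
    linear_combination (4*D^2*(u*z)^2 + 2*D*(u*z)*((3*T+2)*(3*T-8)) + ((3*T+2)*(3*T-8))^2) * hvE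
  have c2 : (D*(3*T + 2)^3) * (8*D^2*u^3) = (D*(3*T + 2)^3) * (5*T*(3*T - 8)^3) := by
    linear_combination (-(8*D^3*u^3)) * hsE + 5*T*D*c1
  have huE : 8*D^2*u^3 = 5*T*(3*T - 8)^3 :=
    mul_left_cancel₀ (mul_ne_zero (ne_of_gt hDpos) (pow_ne_zero _ h3T2)) c2
  have hwpos : 0 < 5*T*(3*T - 8)^3 := by rw [← huE]; positivity
  have hDs : 200*T^2*D^2*(8*z^6 - 12*z^3 + 3*u^2*z^2 + 3 - u^3) = -(9*T-4)^3*(T+4)^3 := by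
    linear_combination (64*(5*T*D*z^3 + (3*T+2)^3) - 480*T*D) * hsE
      + 150*T^2*(2*D*(u*z) + (3*T+2)*(3*T-8)) * hvE + (-25*T^2) * huE
  have hhE : 100*T^2*D^2*(z^2*(8*z^4 - 6*z + u^2))
      = (T+4)*(3*T+2)^2*(657*T^3 + 564*T^2 - 224*T + 128) := by
    linear_combination (32*(5*T*D*z^3 + (3*T+2)^3) - 120*T*D) * hsE
      + 25*T^2*(2*D*(u*z) + (3*T+2)*(3*T-8)) * hvE
  have hXE : 100*T^2*D^2*(z*(64*u*z^3 + 24*z^2 + 6*u^2*z - 18*u))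
      = 10*T*(9*T+16)*(3*T+2)*(9*T-4)^3 := by
    linear_combination (1280*T*D*(u*z) + 480*T*D) * hsE
      + (640*T*(3*T+2)^3 + 150*T^2*(2*D*(u*z) + (3*T+2)*(3*T-8)) - 900*T^2*D) * hvE
  have hu32 : 8*D^2*(u^3 - 2) = -(T+4)*(441*T^3 - 108*T^2 + 768*T + 1024) := by
    rw [hD]; linear_combination huE
  have hw3T : 9*T + 16 ≠ 0 := by
    intro h
    have hT16 : T = -16/9 := by linarith
    rw [hT16, hD, hT16] at huE
    norm_num at huE
    nlinarith [huE]
  have h100 : 0 < 100*T^2*D^2 := by positivity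
  have h200 : 0 < 200*T^2*D^2 := by positivity
  have hreg : T < 0 ∨ 8/3 < T := by
    by_contra h
    push_neg at h
    obtain ⟨h1, h2⟩ := h
    have h38 : (3*T - 8)^3 ≤ 0 := by nlinarith only [sq_nonneg (3*T - 8), h2]
    nlinarith only [mul_nonpos_of_nonneg_of_nonpos h1 h38, hwpos]
  rcases hreg with hneg | hpos8
  · rcases lt_or_ge T (-16/9) with hR2 | hR1ge
    · -- region R2 : T < -16/9 (b-branch)
      have h32 : 3*T + 2 < 0 := by linarith only [hR2]
      have h94 : 9*T - 4 < 0 := by linarith only [hR2]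
      have h916 : 9*T + 16 < 0 := by linarith only [hR2]
      have hcube : (3*T + 2)^3 < 0 := cube_neg_of_neg h32
      have h5TD : 5*T*D < 0 := by
        nlinarith only [mul_pos (show 0 < -T by linarith only [hR2]) hDpos]
      have hz3 : 0 < z^3 := by
        by_contra hc
        push_neg at hc
        nlinarith only [mul_nonneg (show (0:ℝ) ≤ -(5*T*D) by linarith only [h5TD])
          (show (0:ℝ) ≤ -(z^3) by linarith only [hc]), hsE, hcube]
      have hzpos : 0 < z := cube_pos_of_pos hz3
      have h94sq : 0 < (9*T-4)^2 := by nlinarith only [mul_pos_of_neg_of_neg h94 h94]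
      have hrhs : 0 < 10*T*(9*T+16)*(3*T+2)*(9*T-4)^3 := by
        have e : 10*T*(9*T+16)*(3*T+2)*(9*T-4)^3
            = ((-(10*T)) * (-(9*T+16))) * ((-(3*T+2)) * ((-(9*T-4)) * (9*T-4)^2)) := by ring
        rw [e]
        exact mul_pos (mul_pos (by linarith only [hR2]) (by linarith only [h916]))
          (mul_pos (by linarith only [h32]) (mul_pos (by linarith only [h94]) h94sq))
      have hXpos : 0 < z*(64*u*z^3 + 24*z^2 + 6*u^2*z - 18*u) :=
        pos_of_mul_pos_pos h100 (by rw [hXE]; exact hrhs)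
      have hPq : 0 < 64*u*z^3 + 24*z^2 + 6*u^2*z - 18*u := pos_of_mul_pos_pos hzpos hXpos
      refine ⟨fun h => absurd h (not_le.mpr hPq), fun _ => ?_⟩
      have hK : 441*T^3 - 108*T^2 + 768*T + 1024 < 0 := Kneg hR2
      have hD2 : 0 < 8*D^2 := by positivity
      refine ⟨?_, ?_, ?_⟩
      · -- u^3 < 2 → Ds < 0
        intro hu2
        have h8D : 8*D^2*(u^3 - 2) < 0 := by
          nlinarith only [mul_pos hD2 (show 0 < 2 - u^3 by linarith only [hu2])]
        have hT4 : T + 4 < 0 := by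
          by_contra hc
          push_neg at hc
          nlinarith only [mul_nonneg hc (show (0:ℝ) ≤ -(441*T^3 - 108*T^2 + 768*T + 1024)
            by linarith only [hK]), hu32, h8D]
        have hrhsneg : -(9*T-4)^3*(T+4)^3 < 0 := by
          have e : -(9*T-4)^3*(T+4)^3 = -(((9*T-4)*(T+4))^3) := by ring
          rw [e]
          linarith only [pow_pos (mul_pos_of_neg_of_neg h94 hT4) 3]
        exact neg_of_mul_pos_neg h200 (by rw [hDs]; exact hrhsneg)
      · -- u^3 = 2 → Ds = 0
        intro hu2
        have h8D : -(T+4)*(441*T^3 - 108*T^2 + 768*T + 1024) = 0 := by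
          rw [← hu32, hu2]; ring
        have hT4 : T = -4 := by
          rcases mul_eq_zero.mp h8D with h | h
          · linarith only [neg_eq_zero.mp h]
          · exact absurd h (ne_of_lt hK)
        have e0 : -(9*T-4)^3*(T+4)^3 = 0 := by rw [hT4]; norm_num
        exact eq_zero_of_mul_pos_zero h200 (by rw [hDs, e0])
      · -- 2 < u^3 → Ds > 0 ∧ hh ≤ 0
        intro hu2
        have h8D : 0 < 8*D^2*(u^3 - 2) := by
          nlinarith only [mul_pos hD2 (show 0 < u^3 - 2 by linarith only [hu2])]
        have hT4 : 0 < T + 4 := by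
          by_contra hc
          push_neg at hc
          nlinarith only [mul_nonneg (show (0:ℝ) ≤ -(T+4) by linarith only [hc])
            (show (0:ℝ) ≤ -(441*T^3 - 108*T^2 + 768*T + 1024) by linarith only [hK]), hu32, h8D]
        constructor
        · have hrhspos : 0 < -(9*T-4)^3*(T+4)^3 := by
            have e : -(9*T-4)^3*(T+4)^3 = (-(9*T-4))^3*(T+4)^3 := by ring
            rw [e]
            exact mul_pos (pow_pos (by linarith only [h94]) 3) (pow_pos hT4 3)
          exact pos_of_mul_pos_pos h200 (by rw [hDs]; exact hrhspos)
        · have hH3 : 657*T^3 + 564*T^2 - 224*T + 128 < 0 := H3neg hR2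
          have h32sq : 0 < (3*T+2)^2 := by nlinarith only [mul_pos_of_neg_of_neg h32 h32]
          have hrhsneg : (T+4)*(3*T+2)^2*(657*T^3 + 564*T^2 - 224*T + 128) < 0 := by
            nlinarith only [mul_pos (mul_pos hT4 h32sq) (show 0 < -(657*T^3 + 564*T^2 - 224*T + 128)
              by linarith only [hH3])]
          have hz2hh : z^2*(8*z^4 - 6*z + u^2) < 0 :=
            neg_of_mul_pos_neg h100 (by rw [hhE]; exact hrhsneg)
          have hz2 : 0 < z^2 := by positivity
          by_contra hc
          push_neg at hc
          linarith only [mul_nonneg (le_of_lt hz2) (le_of_lt hc), hz2hh]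
    · -- region R1 : -16/9 ≤ T < 0 (a-branch)
      have hR1 : -16/9 < T := lt_of_le_of_ne hR1ge (fun h => hw3T (by rw [← h]; norm_num))
      have h94 : 9*T - 4 < 0 := by linarith only [hneg]
      have h916 : 0 < 9*T + 16 := by linarith only [hR1]
      have hT4 : 0 < T + 4 := by linarith only [hR1]
      have h94sq : 0 < (9*T-4)^2 := by nlinarith only [mul_pos_of_neg_of_neg h94 h94]
      have hDspos : 0 < 8*z^6 - 12*z^3 + 3*u^2*z^2 + 3 - u^3 := by
        have hrhspos : 0 < -(9*T-4)^3*(T+4)^3 := by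
          have e : -(9*T-4)^3*(T+4)^3 = (-(9*T-4))^3*(T+4)^3 := by ring
          rw [e]
          exact mul_pos (pow_pos (by linarith only [h94]) 3) (pow_pos hT4 3)
        exact pos_of_mul_pos_pos h200 (by rw [hDs]; exact hrhspos)
      refine ⟨fun _ => hDspos, fun h0 => ?_⟩
      exfalso
      rcases lt_or_gt_of_ne h3T2 with h32 | h32
      · -- 3T+2 < 0 : z > 0, X < 0
        have hcube : (3*T + 2)^3 < 0 := cube_neg_of_neg h32
        have h5TD : 5*T*D < 0 := by
          nlinarith only [mul_pos (show 0 < -T by linarith only [hneg]) hDpos]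
        have hz3 : 0 < z^3 := by
          by_contra hc
          push_neg at hc
          nlinarith only [mul_nonneg (show (0:ℝ) ≤ -(5*T*D) by linarith only [h5TD])
            (show (0:ℝ) ≤ -(z^3) by linarith only [hc]), hsE, hcube]
        have hzpos : 0 < z := cube_pos_of_pos hz3
        have hrhsneg : 10*T*(9*T+16)*(3*T+2)*(9*T-4)^3 < 0 := by
          have e : 10*T*(9*T+16)*(3*T+2)*(9*T-4)^3
              = -(((-(10*T)) * (9*T+16)) * ((-(3*T+2)) * ((-(9*T-4)) * (9*T-4)^2))) := by ring
          rw [e]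
          have hp : 0 < ((-(10*T)) * (9*T+16)) * ((-(3*T+2)) * ((-(9*T-4)) * (9*T-4)^2)) :=
            mul_pos (mul_pos (by linarith only [hneg]) h916)
              (mul_pos (by linarith only [h32]) (mul_pos (by linarith only [h94]) h94sq))
          linarith only [hp]
        have hXneg : z*(64*u*z^3 + 24*z^2 + 6*u^2*z - 18*u) < 0 :=
          neg_of_mul_pos_neg h100 (by rw [hXE]; exact hrhsneg)
        linarith only [mul_nonneg (le_of_lt hzpos) h0, hXneg]
      · -- 3T+2 > 0 : z < 0, X > 0
        have hcube : 0 < (3*T + 2)^3 := pow_pos h32 3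
        have h5TD : 5*T*D < 0 := by
          nlinarith only [mul_pos (show 0 < -T by linarith only [hneg]) hDpos]
        have hz3 : z^3 < 0 := by
          by_contra hc
          push_neg at hc
          nlinarith only [mul_nonpos_of_nonpos_of_nonneg (le_of_lt h5TD) hc, hsE, hcube]
        have hzneg : z < 0 := by
          by_contra hc
          push_neg at hc
          nlinarith only [hz3, mul_nonneg (mul_nonneg hc hc) hc]
        have hrhspos : 0 < 10*T*(9*T+16)*(3*T+2)*(9*T-4)^3 := by
          have e : 10*T*(9*T+16)*(3*T+2)*(9*T-4)^3
              = ((-(10*T)) * (9*T+16)) * ((3*T+2) * ((-(9*T-4)) * (9*T-4)^2)) := by ring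
          rw [e]
          exact mul_pos (mul_pos (by linarith only [hneg]) h916)
            (mul_pos h32 (mul_pos (by linarith only [h94]) h94sq))
        have hXpos : 0 < z*(64*u*z^3 + 24*z^2 + 6*u^2*z - 18*u) :=
          pos_of_mul_pos_pos h100 (by rw [hXE]; exact hrhspos)
        linarith only [mul_nonpos_of_nonpos_of_nonneg (le_of_lt hzneg) h0, hXpos]
  · -- region R3 : T > 8/3 (b-branch, u^3 < 2)
    have h32 : 0 < 3*T + 2 := by linarith only [hpos8]
    have h94 : 0 < 9*T - 4 := by linarith only [hpos8]
    have h916 : 0 < 9*T + 16 := by linarith only [hpos8]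
    have hT4 : 0 < T + 4 := by linarith only [hpos8]
    have hK : 0 < 441*T^3 - 108*T^2 + 768*T + 1024 := Kpos hpos8
    have hD2 : 0 < 8*D^2 := by positivity
    have hu2 : u^3 < 2 := by
      have hneg' : 8*D^2*(u^3 - 2) < 0 := by
        rw [hu32]
        nlinarith only [mul_pos hT4 hK]
      linarith only [neg_of_mul_pos_neg hD2 hneg']
    have h5TD : 0 < 5*T*D := by
      have hTpos : 0 < T := by linarith only [hpos8]
      positivity
    have hz3 : 0 < z^3 := by
      by_contra hc
      push_neg at hc
      nlinarith only [mul_nonpos_of_nonneg_of_nonpos (le_of_lt h5TD) hc, hsE, pow_pos h32 3]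
    have hzpos : 0 < z := cube_pos_of_pos hz3
    have hrhspos : 0 < 10*T*(9*T+16)*(3*T+2)*(9*T-4)^3 := by
      have h94c : 0 < (9*T-4)^3 := pow_pos h94 3
      have h10T : 0 < 10*T := by linarith only [hpos8]
      exact mul_pos (mul_pos (mul_pos h10T h916) h32) h94c
    have hXpos : 0 < z*(64*u*z^3 + 24*z^2 + 6*u^2*z - 18*u) :=
      pos_of_mul_pos_pos h100 (by rw [hXE]; exact hrhspos)
    have hPq : 0 < 64*u*z^3 + 24*z^2 + 6*u^2*z - 18*u := pos_of_mul_pos_pos hzpos hXpos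
    have hDsneg : 8*z^6 - 12*z^3 + 3*u^2*z^2 + 3 - u^3 < 0 := by
      have hrhsneg : -(9*T-4)^3*(T+4)^3 < 0 := by
        linarith only [mul_pos (pow_pos h94 3) (pow_pos hT4 3)]
      exact neg_of_mul_pos_neg h200 (by rw [hDs]; exact hrhsneg)
    exact ⟨fun h => absurd h (not_le.mpr hPq),
      fun _ => ⟨fun _ => hDsneg, fun h => absurd h (by linarith only [hu2, h]),
        fun h => absurd h (by simp only [not_lt]; linarith only [hu2])⟩⟩

/-- derivative of the sextic -/
lemma hasDerivDs (u : ℝ) (x : ℝ) :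
    HasDerivAt (fun y : ℝ => 8*y^6 - 12*y^3 + 3*u^2*y^2 + 3 - u^3)
      (6*x*(8*x^4 - 6*x + u^2)) x := by
  have h : HasDerivAt (fun y : ℝ => 8*y^6 - 12*y^3 + 3*u^2*y^2 + 3 - u^3)
      (8*(6*x^5) - 12*(3*x^2) + 3*u^2*(2*x^1) + 0 - 0) x := by
    exact ((((hasDerivAt_pow 6 x).const_mul 8).sub ((hasDerivAt_pow 3 x).const_mul 12)).add
      ((hasDerivAt_pow 2 x).const_mul (3*u^2))).add_const (3) |>.sub_const (u^3) |>.congr_deriv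
      (by push_cast; ring)
  convert h using 1
  push_cast
  ring

lemma contDs (u : ℝ) : Continuous (fun y : ℝ => 8*y^6 - 12*y^3 + 3*u^2*y^2 + 3 - u^3) := by
  fun_prop

/-- monotone increasing version -/
lemma Ds_mono (u : ℝ) {p q : ℝ} (hpq : p ≤ q)
    (hder : ∀ r, p < r → r < q → 0 ≤ 6*r*(8*r^4 - 6*r + u^2)) :
    (8*p^6 - 12*p^3 + 3*u^2*p^2 + 3 - u^3) ≤ (8*q^6 - 12*q^3 + 3*u^2*q^2 + 3 - u^3) := by
  have := monotoneOn_of_deriv_nonneg (convex_Icc p q) ((contDs u).continuousOn)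
    (fun x _ => ((hasDerivDs u x).differentiableAt).differentiableWithinAt)
    (fun x hx => by
      rw [interior_Icc] at hx
      rw [(hasDerivDs u x).deriv]
      exact hder x hx.1 hx.2)
  exact this (left_mem_Icc.mpr hpq) (right_mem_Icc.mpr hpq) hpq

/-- antitone version -/
lemma Ds_anti (u : ℝ) {p q : ℝ} (hpq : p ≤ q)
    (hder : ∀ r, p < r → r < q → 6*r*(8*r^4 - 6*r + u^2) ≤ 0) :
    (8*q^6 - 12*q^3 + 3*u^2*q^2 + 3 - u^3) ≤ (8*p^6 - 12*p^3 + 3*u^2*p^2 + 3 - u^3) := by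
  have := antitoneOn_of_deriv_nonpos (convex_Icc p q) ((contDs u).continuousOn)
    (fun x _ => ((hasDerivDs u x).differentiableAt).differentiableWithinAt)
    (fun x hx => by
      rw [interior_Icc] at hx
      rw [(hasDerivDs u x).deriv]
      exact hder x hx.1 hx.2)
  exact this (left_mem_Icc.mpr hpq) (right_mem_Icc.mpr hpq) hpq

/-- Rolle for the sextic -/
lemma Ds_rolle (u : ℝ) {p q : ℝ} (hpq : p < q)
    (heq : 8*p^6 - 12*p^3 + 3*u^2*p^2 + 3 - u^3 = 8*q^6 - 12*q^3 + 3*u^2*q^2 + 3 - u^3) :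
    ∃ m ∈ Ioo p q, 6*m*(8*m^4 - 6*m + u^2) = 0 := by
  obtain ⟨m, hm, hder⟩ := exists_deriv_eq_zero hpq ((contDs u).continuousOn) heq
  exact ⟨m, hm, by rw [← (hasDerivDs u m).deriv]; exact hder⟩

/-- convexity transfer for the quartic hh -/
lemma hh_convex_combo (u : ℝ) {p q r : ℝ} (hpr : p ≤ r) (hrq : r ≤ q) :
    ∃ a b : ℝ, 0 ≤ a ∧ 0 ≤ b ∧ a + b = 1 ∧ (p < r → r < q → 0 < a ∧ 0 < b) ∧
      8*r^4 - 6*r + u^2 ≤ a * (8*p^4 - 6*p + u^2) + b * (8*q^4 - 6*q + u^2) := by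
  rcases eq_or_lt_of_le (hpr.trans hrq) with h | hpltq
  · -- p = q, so r = p
    have hrp : r = p := le_antisymm (h ▸ hrq) hpr
    have e1 : 1*(8*p^4 - 6*p + u^2) + 0*(8*q^4 - 6*q + u^2) = 8*p^4 - 6*p + u^2 := by ring
    exact ⟨1, 0, by norm_num, le_refl 0, by norm_num,
      fun h1 h2 => absurd (h1.trans h2) (by rw [h]; exact lt_irrefl q),
      by rw [hrp, e1]⟩
  · set a : ℝ := (q - r)/(q - p) with ha
    set b : ℝ := (r - p)/(q - p) with hb
    have hqp : 0 < q - p := by linarith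
    have ha0 : 0 ≤ a := div_nonneg (by linarith) (by linarith)
    have hb0 : 0 ≤ b := div_nonneg (by linarith) (by linarith)
    have hab : a + b = 1 := by rw [ha, hb]; field_simp; ring
    have hr : r = a * p + b * q := by rw [ha, hb]; field_simp; ring
    have hconv := (Even.convexOn_pow (⟨2, by norm_num⟩ : Even 4)).2 (mem_univ p) (mem_univ q) ha0 hb0 hab
    rw [smul_eq_mul, smul_eq_mul, smul_eq_mul, smul_eq_mul] at hconv
    refine ⟨a, b, ha0, hb0, hab, ?_, ?_⟩
    · intro h1 h2
      exact ⟨div_pos (by linarith) hqp, div_pos (by linarith) hqp⟩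
    · have : r^4 ≤ a * p^4 + b * q^4 := by rw [hr]; exact hconv
      nlinarith [this, hr, hab]

/-- two distinct positive common roots of hh and Ds are impossible -/
lemma no_two_roots {u x y : ℝ} (hx0 : 0 < x) (hxy : x < y)
    (hhx : 8*x^4 - 6*x + u^2 = 0) (hhy : 8*y^4 - 6*y + u^2 = 0)
    (hdx : 8*x^6 - 12*x^3 + 3*u^2*x^2 + 3 - u^3 = 0)
    (hdy : 8*y^6 - 12*y^3 + 3*u^2*y^2 + 3 - u^3 = 0) : False := by
  have hy0 : 0 < y := hx0.trans hxy
  have h1 : u^3 = -16*x^6 + 6*x^3 + 3 := by linear_combination -hdx + 3*x^2*hhx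
  have h2 : u^3 = -16*y^6 + 6*y^3 + 3 := by linear_combination -hdy + 3*y^2*hhy
  have h3 : (x^3 - y^3)*(16*(x^3 + y^3) - 6) = 0 := by linear_combination h1 - h2
  have hx3y3 : x^3 < y^3 := by nlinarith [mul_pos hx0 hy0, sq_nonneg (x + y), mul_pos (mul_pos hx0 hx0) hy0]
  have hP : x^3 + y^3 = 3/8 := by
    rcases mul_eq_zero.mp h3 with h | h
    · linarith [sub_eq_zero.mp h]
    · linarith
  have h4 : (x - y)*(8*(x^3 + x^2*y + x*y^2 + y^3) - 6) = 0 := by linear_combination hhx - hhy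
  have hQ : x^3 + x^2*y + x*y^2 + y^3 = 3/4 := by
    rcases mul_eq_zero.mp h4 with h | h
    · exact absurd (sub_eq_zero.mp h) (ne_of_lt hxy)
    · linarith
  have h6 : x*y*(x + y) = 3/8 := by linear_combination hQ - hP
  have h7 : (x + y)^3 = 3/2 := by linear_combination hP + 3*h6
  have h8 : (x - y)^2*(x + y) = 0 := by linear_combination h7 - 4*h6
  have hxy2 : 0 < (x - y)^2 := by nlinarith [mul_pos_of_neg_of_neg (show x - y < 0 by linarith) (show x - y < 0 by linarith)]
  nlinarith [h8, mul_pos hxy2 (show 0 < x + y by linarith)]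

/-- one-sided derivative bound from right positivity -/
lemma deriv_nonneg_of_right_pos {f : ℝ → ℝ} {f' b : ℝ} (hf : HasDerivAt f f' b)
    (hb : f b = 0) (hpos : ∀ y, b < y → 0 < f y) : 0 ≤ f' := by
  have hslope := hasDerivAt_iff_tendsto_slope.mp hf
  have hmono : Tendsto (slope f b) (nhdsWithin b (Ioi b)) (nhds f') :=
    hslope.mono_left (nhdsWithin_mono b (fun y hy => ne_of_gt hy))
  refine ge_of_tendsto hmono ?_
  filter_upwards [self_mem_nhdsWithin] with y hy
  rw [slope_def_field]
  have : 0 < f y := hpos y hy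
  have : 0 ≤ f y - f b := by rw [hb]; linarith
  apply div_nonneg this (by simp at hy; linarith)

/-- one-sided derivative bound from left positivity -/
lemma deriv_nonpos_of_left_pos {f : ℝ → ℝ} {f' a : ℝ} (hf : HasDerivAt f f' a)
    (ha : f a = 0) (hpos : ∀ y, y < a → 0 < f y) : f' ≤ 0 := by
  have hslope := hasDerivAt_iff_tendsto_slope.mp hf
  have hmono : Tendsto (slope f a) (nhdsWithin a (Iio a)) (nhds f') :=
    hslope.mono_left (nhdsWithin_mono a (fun y hy => ne_of_lt hy))
  refine le_of_tendsto hmono ?_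
  filter_upwards [self_mem_nhdsWithin] with y hy
  rw [slope_def_field]
  have h1 : 0 < f y := hpos y hy
  have h2 : 0 ≤ f y - f a := by rw [ha]; linarith
  have h3 : y - a < 0 := by simp at hy; linarith
  exact div_nonpos_of_nonneg_of_nonpos h2 (le_of_lt h3)

/-- derivative of the quartic Pq -/
lemma hasDerivPq (u : ℝ) (x : ℝ) :
    HasDerivAt (fun y : ℝ => 16*u*y^4 + 8*y^3 + 3*u^2*y^2 - 18*u*y + 6*u^3 - 9)
      (64*u*x^3 + 24*x^2 + 6*u^2*x - 18*u) x := by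
  have h : HasDerivAt (fun y : ℝ => 16*u*y^4 + 8*y^3 + 3*u^2*y^2 - 18*u*y + 6*u^3 - 9)
      (16*u*(4*x^3) + 8*(3*x^2) + 3*u^2*(2*x^1) - 18*u*1 + 0 - 0) x := by
    exact (((((hasDerivAt_pow 4 x).const_mul (16*u)).add ((hasDerivAt_pow 3 x).const_mul 8)).add
      ((hasDerivAt_pow 2 x).const_mul (3*u^2))).sub ((hasDerivAt_id x).const_mul (18*u))).add_const
      (6*u^3) |>.sub_const 9 |>.congr_deriv (by push_cast; ring)
  convert h using 1
  ring

/-- the parameter u -/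
def uu (τ : ℝ) : ℝ := (3 : ℝ) ^ ((1 : ℝ)/3) * (1 - 4*τ) ^ ((1 : ℝ)/3)

lemma uu_pos {τ : ℝ} (h4 : τ < 1/4) : 0 < uu τ :=
  mul_pos (Real.rpow_pos_of_pos (by norm_num) _) (Real.rpow_pos_of_pos (by linarith) _)

lemma uu_cube {τ : ℝ} (h4 : τ < 1/4) : (uu τ)^3 = 3 - 12*τ := by
  unfold uu
  rw [mul_pow, ← Real.rpow_natCast ((3:ℝ)^((1:ℝ)/3)) 3,
    ← Real.rpow_natCast ((1-4*τ)^((1:ℝ)/3)) 3,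
    ← Real.rpow_mul (by norm_num : (0:ℝ) ≤ 3), ← Real.rpow_mul (by linarith : (0:ℝ) ≤ 1-4*τ)]
  norm_num
  ring

lemma ccf_eq {τ : ℝ} (h4 : τ < 1/4) : ccf τ = -(3*(uu τ)^2)/4 := by
  have h1 : ((243*(1-4*τ)^2/64 : ℝ) ^ ((1:ℝ)/3))^3 = 243*(1-4*τ)^2/64 := by
    rw [← Real.rpow_natCast ((243*(1-4*τ)^2/64 : ℝ) ^ ((1:ℝ)/3)) 3,
      ← Real.rpow_mul (by positivity)]
    norm_num
  have h2 : ((3*(uu τ)^2)/4)^3 = 243*(1-4*τ)^2/64 := by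
    have hc := uu_cube h4
    linear_combination ((27:ℝ)/64) * ((uu τ)^3 + (3 - 12*τ)) * hc
  have := cube_inj (h1.trans h2.symm)
  rw [ccf, this]
  ring

lemma uu_sq {τ : ℝ} (h4 : τ < 1/4) : (uu τ)^2 = (3:ℝ)^((2:ℝ)/3) * (1-4*τ)^((2:ℝ)/3) := by
  unfold uu
  rw [mul_pow, ← Real.rpow_natCast ((3:ℝ)^((1:ℝ)/3)) 2,
    ← Real.rpow_natCast ((1-4*τ)^((1:ℝ)/3)) 2,
    ← Real.rpow_mul (by norm_num : (0:ℝ) ≤ 3), ← Real.rpow_mul (by linarith : (0:ℝ) ≤ 1-4*τ)]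
  norm_num

lemma q1_eq {τ : ℝ} (h4 : τ < 1/4) (x : ℝ) :
    q1 τ ((x : ℝ) : ℂ) = (((16/9)*(16*(uu τ)*x^4 + 8*x^3 + 3*(uu τ)^2*x^2
      - 18*(uu τ)*x + 6*(uu τ)^3 - 9) : ℝ) : ℂ) := by
  have h3a : (3:ℝ)^((5:ℝ)/3) * (3:ℝ)^((1:ℝ)/3) = 9 := by
    rw [← Real.rpow_add (by norm_num : (0:ℝ) < 3)]
    norm_num
  have h3b : (3:ℝ)^((1:ℝ)/3) * (3:ℝ)^((2:ℝ)/3) = 3 := by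
    rw [← Real.rpow_add (by norm_num : (0:ℝ) < 3)]
    norm_num
  have h5pos : (0:ℝ) < (3:ℝ)^((5:ℝ)/3) := Real.rpow_pos_of_pos (by norm_num) _
  have h1pos : (0:ℝ) < (3:ℝ)^((1:ℝ)/3) := Real.rpow_pos_of_pos (by norm_num) _
  have e4 : (256 / (3:ℝ)^((5:ℝ)/3) * (1-4*τ)^((1:ℝ)/3)) = 256/9*(uu τ) := by
    unfold uu
    rw [show (256:ℝ)/9*((3:ℝ)^((1:ℝ)/3)*(1-4*τ)^((1:ℝ)/3))
      = 256*(3:ℝ)^((1:ℝ)/3)/9*(1-4*τ)^((1:ℝ)/3) by ring]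
    congr 1
    field_simp
    linarith [h3a]
  have e2 : (16 / (3:ℝ)^((1:ℝ)/3) * (1-4*τ)^((2:ℝ)/3)) = 16/3*(uu τ)^2 := by
    rw [uu_sq h4]
    rw [show (16:ℝ)/3*((3:ℝ)^((2:ℝ)/3)*(1-4*τ)^((2:ℝ)/3))
      = 16*(3:ℝ)^((2:ℝ)/3)/3*(1-4*τ)^((2:ℝ)/3) by ring]
    congr 1
    field_simp
    linarith [h3b]
  have e1 : (32 * (3:ℝ)^((1:ℝ)/3) * (1-4*τ)^((1:ℝ)/3)) = 32*(uu τ) := by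
    unfold uu; ring
  have e0 : (16*(1 - 8*τ)) = 16/9*(6*(uu τ)^3 - 9) := by
    rw [uu_cube h4]; ring
  rw [q1, e4, e2, e1, e0]
  push_cast
  ring

lemma DD_eq {τ : ℝ} (h4 : τ < 1/4) (x : ℝ) :
    DD τ ((x : ℝ) : ℂ) = ((-(1/4)*(8*x^6 - 12*x^3 + 3*(uu τ)^2*x^2 + 3 - (uu τ)^3) : ℝ) : ℂ) := by
  have hu3 : ((uu τ : ℂ))^3 = 3 - 12*(τ:ℂ) := by
    have := uu_cube h4
    exact_mod_cast congrArg (fun r : ℝ => (r : ℂ)) this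
  rw [DD, ccf_eq h4]
  push_cast
  linear_combination (-(1:ℂ)/4) * hu3

/-- For `τ ∈ (0, 1/4)` with `a₁ < b₁` the two real roots of `q₁`:
for `0 < τ < 1/12` the polynomial `D` has no zeros in `(a₁, b₁)`; for `1/12 < τ < 1/4` it has
exactly one zero there; `D(b₁) = 0` iff `τ = 1/12`; and `D(a₁) ≠ 0` for all `τ ∈ (0,1/4)`. -/
theorem zeros_of_D (τ a₁ b₁ : ℝ) (hτ : τ ∈ Set.Ioo (0 : ℝ) (1 / 4))
    (hab : a₁ < b₁) (ha : q1 τ ((a₁ : ℝ) : ℂ) = 0) (hb : q1 τ ((b₁ : ℝ) : ℂ) = 0)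
    (honly : ∀ x : ℝ, q1 τ ((x : ℝ) : ℂ) = 0 → x = a₁ ∨ x = b₁) :
    (τ < 1 / 12 → ∀ x : ℝ, x ∈ Set.Ioo a₁ b₁ → DD τ ((x : ℝ) : ℂ) ≠ 0) ∧
    (1 / 12 < τ → ∃! x : ℝ, x ∈ Set.Ioo a₁ b₁ ∧ DD τ ((x : ℝ) : ℂ) = 0) ∧
    (DD τ ((b₁ : ℝ) : ℂ) = 0 ↔ τ = 1 / 12) ∧
    DD τ ((a₁ : ℝ) : ℂ) ≠ 0 := by
  obtain ⟨hτ0, hτ4⟩ := hτ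
  have h4 : τ < 1/4 := by linarith
  have hu : 0 < uu τ := uu_pos h4
  have hu3 : (uu τ)^3 = 3 - 12*τ := uu_cube h4
  have hw3 : (uu τ)^3 < 3 := by rw [hu3]; linarith
  -- conversions between complex statements and real polynomials
  have hq1r : ∀ x : ℝ, q1 τ ((x : ℝ) : ℂ) = 0 ↔
      16*(uu τ)*x^4 + 8*x^3 + 3*(uu τ)^2*x^2 - 18*(uu τ)*x + 6*(uu τ)^3 - 9 = 0 := by
    intro x
    rw [q1_eq h4 x, Complex.ofReal_eq_zero]
    constructor
    · intro h; linarith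
    · intro h; linarith
  have hDDr : ∀ x : ℝ, DD τ ((x : ℝ) : ℂ) = 0 ↔
      8*x^6 - 12*x^3 + 3*(uu τ)^2*x^2 + 3 - (uu τ)^3 = 0 := by
    intro x
    rw [DD_eq h4 x, Complex.ofReal_eq_zero]
    constructor
    · intro h; linarith
    · intro h; linarith
  have hPa : 16*(uu τ)*a₁^4 + 8*a₁^3 + 3*(uu τ)^2*a₁^2 - 18*(uu τ)*a₁ + 6*(uu τ)^3 - 9 = 0 :=
    (hq1r a₁).mp ha
  have hPb : 16*(uu τ)*b₁^4 + 8*b₁^3 + 3*(uu τ)^2*b₁^2 - 18*(uu τ)*b₁ + 6*(uu τ)^3 - 9 = 0 :=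
    (hq1r b₁).mp hb
  have hronly : ∀ x : ℝ,
      16*(uu τ)*x^4 + 8*x^3 + 3*(uu τ)^2*x^2 - 18*(uu τ)*x + 6*(uu τ)^3 - 9 = 0 →
      x = a₁ ∨ x = b₁ := fun x hx => honly x ((hq1r x).mpr hx)
  have hPcont : Continuous (fun x : ℝ =>
      16*(uu τ)*x^4 + 8*x^3 + 3*(uu τ)^2*x^2 - 18*(uu τ)*x + 6*(uu τ)^3 - 9) := by fun_prop
  -- positivity of the quartic to the right of b₁
  have pos_right : ∀ x, b₁ < x →
      0 < 16*(uu τ)*x^4 + 8*x^3 + 3*(uu τ)^2*x^2 - 18*(uu τ)*x + 6*(uu τ)^3 - 9 := by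
    intro x hx
    rcases lt_trichotomy (16*(uu τ)*x^4 + 8*x^3 + 3*(uu τ)^2*x^2 - 18*(uu τ)*x + 6*(uu τ)^3 - 9) 0
      with hneg | h0 | hpos
    · exfalso
      set N := max (x+1) 2 with hN
      have hN2 : (2:ℝ) ≤ N := le_max_right _ _
      have hNx : x < N := lt_of_lt_of_le (by linarith) (le_max_left _ _)
      have hPN : 0 < 16*(uu τ)*N^4 + 8*N^3 + 3*(uu τ)^2*N^2 - 18*(uu τ)*N + 6*(uu τ)^3 - 9 := by
        have hN3 : (8:ℝ) ≤ N^3 := by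
          nlinarith [mul_nonneg (show (0:ℝ) ≤ N-2 by linarith)
            (show (0:ℝ) ≤ N^2 + 2*N + 4 by nlinarith [sq_nonneg N])]
        have h1 : (0:ℝ) < 8*N^3 - 9 := by linarith
        have h2 : 0 < (uu τ)*N*(16*N^3 - 18) :=
          mul_pos (mul_pos hu (by linarith)) (by linarith)
        nlinarith [sq_nonneg ((uu τ)*N), pow_pos hu 3]
      have h0mem : (0:ℝ) ∈ Set.Ioo
          (16*(uu τ)*x^4 + 8*x^3 + 3*(uu τ)^2*x^2 - 18*(uu τ)*x + 6*(uu τ)^3 - 9)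
          (16*(uu τ)*N^4 + 8*N^3 + 3*(uu τ)^2*N^2 - 18*(uu τ)*N + 6*(uu τ)^3 - 9) := ⟨hneg, hPN⟩
      obtain ⟨y, hy, hPy⟩ := intermediate_value_Ioo (le_of_lt hNx) hPcont.continuousOn h0mem
      rcases hronly y hPy with rfl | rfl
      · linarith [hy.1]
      · linarith [hy.1]
    · exfalso
      rcases hronly x h0 with rfl | rfl
      · linarith
      · linarith
    · exact hpos
  -- positivity of the quartic to the left of a₁
  have pos_left : ∀ x, x < a₁ →
      0 < 16*(uu τ)*x^4 + 8*x^3 + 3*(uu τ)^2*x^2 - 18*(uu τ)*x + 6*(uu τ)^3 - 9 := by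
    intro x hx
    rcases lt_trichotomy (16*(uu τ)*x^4 + 8*x^3 + 3*(uu τ)^2*x^2 - 18*(uu τ)*x + 6*(uu τ)^3 - 9) 0
      with hneg | h0 | hpos
    · exfalso
      set M := max (max 2 (1/(uu τ))) (1 - x) with hM
      have hM2 : (2:ℝ) ≤ M := le_trans (le_max_left _ _) (le_max_left _ _)
      have hMu : 1/(uu τ) ≤ M := le_trans (le_max_right _ _) (le_max_left _ _)
      have hMx : -M < x := by
        have : 1 - x ≤ M := le_max_right _ _
        linarith
      have huM : 1 ≤ (uu τ)*M := by
        rw [div_le_iff₀ hu] at hMu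
        linarith [hMu]
      have hM0 : (0:ℝ) < M := by linarith
      have hPM : 0 < 16*(uu τ)*(-M)^4 + 8*(-M)^3 + 3*(uu τ)^2*(-M)^2 - 18*(uu τ)*(-M)
          + 6*(uu τ)^3 - 9 := by
        have hM3 : (8:ℝ) ≤ M^3 := by
          nlinarith [mul_nonneg (show (0:ℝ) ≤ M-2 by linarith)
            (show (0:ℝ) ≤ M^2 + 2*M + 4 by nlinarith [sq_nonneg M])]
        have key : 16*M^3 ≤ 16*((uu τ)*M)*M^3 := by
          nlinarith [mul_le_mul_of_nonneg_right huM (le_of_lt (pow_pos hM0 3))]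
        nlinarith [sq_nonneg ((uu τ)*M), pow_pos hu 3, mul_pos hu hM0, pow_pos hM0 3]
      have h0mem : (0:ℝ) ∈ Set.Ioo
          (16*(uu τ)*x^4 + 8*x^3 + 3*(uu τ)^2*x^2 - 18*(uu τ)*x + 6*(uu τ)^3 - 9)
          (16*(uu τ)*(-M)^4 + 8*(-M)^3 + 3*(uu τ)^2*(-M)^2 - 18*(uu τ)*(-M) + 6*(uu τ)^3 - 9) :=
        ⟨hneg, hPM⟩
      obtain ⟨y, hy, hPy⟩ := intermediate_value_Ioo' (le_of_lt hMx) hPcont.continuousOn h0mem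
      rcases hronly y hPy with rfl | rfl
      · linarith [hy.2]
      · linarith [hy.2]
    · exfalso
      rcases hronly x h0 with rfl | rfl
      · linarith
      · linarith
    · exact hpos
  -- derivative sign conditions at the two roots
  have hPq'b : 0 ≤ 64*(uu τ)*b₁^3 + 24*b₁^2 + 6*(uu τ)^2*b₁ - 18*(uu τ) :=
    deriv_nonneg_of_right_pos (hasDerivPq (uu τ) b₁) hPb pos_right
  have hPq'a : 64*(uu τ)*a₁^3 + 24*a₁^2 + 6*(uu τ)^2*a₁ - 18*(uu τ) ≤ 0 :=
    deriv_nonpos_of_left_pos (hasDerivPq (uu τ) a₁) hPa pos_left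
  -- branch lemma applications
  have hDsa : 0 < 8*a₁^6 - 12*a₁^3 + 3*(uu τ)^2*a₁^2 + 3 - (uu τ)^3 :=
    (branch (uu τ) a₁ hu hw3 hPa).1 hPq'a
  obtain ⟨hBlt, hBeq, hBgt⟩ := (branch (uu τ) b₁ hu hw3 hPb).2 hPq'b
  -- helper: Ds positive at nonpositive arguments
  have hDs0 : ∀ r : ℝ, r ≤ 0 → 0 < 8*r^6 - 12*r^3 + 3*(uu τ)^2*r^2 + 3 - (uu τ)^3 := by
    intro r hr
    have hanti := Ds_anti (uu τ) hr (fun s hs1 hs2 => by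
      have hhs : 0 < 8*s^4 - 6*s + (uu τ)^2 := by nlinarith [sq_nonneg s, sq_nonneg (s^2), mul_pos hu hu]
      nlinarith [mul_nonneg (le_of_lt hhs) (show (0:ℝ) ≤ -(6*s) by linarith)])
    have h30 : (0:ℝ) < 8*(0:ℝ)^6 - 12*(0:ℝ)^3 + 3*(uu τ)^2*(0:ℝ)^2 + 3 - (uu τ)^3 := by
      norm_num; linarith [hw3]
    linarith [hanti, h30]
  -- helper: any zero of Ds in (a₁,b₁) must satisfy hh ≤ 0 and be positive,
  -- provided Ds b₁ < 0
  have hS : 8*b₁^6 - 12*b₁^3 + 3*(uu τ)^2*b₁^2 + 3 - (uu τ)^3 < 0 →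
      ∀ r, a₁ < r → r < b₁ → 8*r^6 - 12*r^3 + 3*(uu τ)^2*r^2 + 3 - (uu τ)^3 = 0 →
      (8*r^4 - 6*r + (uu τ)^2 ≤ 0 ∧ 0 < r) := by
    intro hDsb r h1 h2 hDr
    have hhle : 8*r^4 - 6*r + (uu τ)^2 ≤ 0 := by
      by_contra hhr
      push_neg at hhr
      rcases lt_or_ge r 0 with hr0 | hr0
      · linarith [hDs0 r (le_of_lt hr0)]
      · by_cases hex : ∃ p, 0 ≤ p ∧ p ≤ r ∧ 8*p^4 - 6*p + (uu τ)^2 ≤ 0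
        · obtain ⟨p, hp0, hpr, hhp⟩ := hex
          -- hh > 0 on [r, b₁], so Ds is monotone there; contradiction with Ds b₁ < 0
          have hmono := Ds_mono (uu τ) (le_of_lt h2) (fun s hs1 hs2 => by
            have hhs : 0 < 8*s^4 - 6*s + (uu τ)^2 := by
              by_contra hc
              push_neg at hc
              obtain ⟨aa, bb, ha0, hb0, hab1, _, hineq⟩ :=
                hh_convex_combo (uu τ) hpr (le_of_lt hs1)
              nlinarith [mul_nonpos_of_nonneg_of_nonpos ha0 hhp,
                mul_nonpos_of_nonneg_of_nonpos hb0 hc]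
            nlinarith [mul_nonneg (show (0:ℝ) ≤ 6*s by linarith) (le_of_lt hhs)])
          linarith [hmono]
        · push_neg at hex
          have hmono := Ds_mono (uu τ) hr0 (fun s hs1 hs2 => by
            have hhs := hex s (le_of_lt hs1) (le_of_lt hs2)
            nlinarith [mul_nonneg (show (0:ℝ) ≤ 6*s by linarith) (le_of_lt hhs)])
          have h30 : (0:ℝ) < 8*(0:ℝ)^6 - 12*(0:ℝ)^3 + 3*(uu τ)^2*(0:ℝ)^2 + 3 - (uu τ)^3 := by
            norm_num; linarith [hw3]
          linarith [hmono]
    refine ⟨hhle, ?_⟩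
    nlinarith [sq_nonneg (r^2), mul_pos hu hu]
  refine ⟨?_, ?_, ?_, ?_⟩
  · -- Part 1 : τ < 1/12, no zeros in (a₁, b₁)
    intro hτ12 x hxmem hDD0
    have hw2 : 2 < (uu τ)^3 := by rw [hu3]; linarith
    obtain ⟨hDsb, hhb⟩ := hBgt hw2
    have hDsx : 8*x^6 - 12*x^3 + 3*(uu τ)^2*x^2 + 3 - (uu τ)^3 = 0 := (hDDr x).mp hDD0
    obtain ⟨hax, hxb⟩ := hxmem
    rcases le_or_gt (8*x^4 - 6*x + (uu τ)^2) 0 with hhx | hhx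
    · -- hh x ≤ 0 : Ds antitone on [x, b₁], so Ds x ≥ Ds b₁ > 0
      have hanti := Ds_anti (uu τ) (le_of_lt hxb) (fun r h1 h2 => by
        obtain ⟨aa, bb, ha0, hb0, hab1, _, hineq⟩ :=
          hh_convex_combo (uu τ) (le_of_lt h1) (le_of_lt h2)
        have hhr : 8*r^4 - 6*r + (uu τ)^2 ≤ 0 := by
          nlinarith [mul_nonpos_of_nonneg_of_nonpos ha0 hhx,
            mul_nonpos_of_nonneg_of_nonpos hb0 hhb]
        have hr0 : 0 ≤ 6*r := by nlinarith [sq_nonneg (r^2), mul_pos hu hu]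
        exact mul_nonpos_of_nonneg_of_nonpos hr0 hhr)
      linarith [hanti]
    · -- hh x > 0
      rcases lt_or_ge x 0 with hx0 | hx0
      · linarith [hDs0 x (le_of_lt hx0)]
      · by_cases hex : ∃ p, 0 ≤ p ∧ p ≤ x ∧ 8*p^4 - 6*p + (uu τ)^2 ≤ 0
        · obtain ⟨p, hp0, hpx, hhp⟩ := hex
          obtain ⟨aa, bb, ha0, hb0, hab1, _, hineq⟩ :=
            hh_convex_combo (uu τ) hpx (le_of_lt hxb)
          nlinarith [mul_nonpos_of_nonneg_of_nonpos ha0 hhp,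
            mul_nonpos_of_nonneg_of_nonpos hb0 hhb]
        · push_neg at hex
          have hmono := Ds_mono (uu τ) hx0 (fun s hs1 hs2 => by
            have hhs := hex s (le_of_lt hs1) (le_of_lt hs2)
            nlinarith [mul_nonneg (show (0:ℝ) ≤ 6*s by linarith) (le_of_lt hhs)])
          have h30 : (0:ℝ) < 8*(0:ℝ)^6 - 12*(0:ℝ)^3 + 3*(uu τ)^2*(0:ℝ)^2 + 3 - (uu τ)^3 := by
            norm_num; linarith [hw3]
          linarith [hmono]
  · -- Part 2 : 1/12 < τ, exactly one zero in (a₁, b₁)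
    intro hτ12
    have hw2 : (uu τ)^3 < 2 := by rw [hu3]; linarith
    have hDsb : 8*b₁^6 - 12*b₁^3 + 3*(uu τ)^2*b₁^2 + 3 - (uu τ)^3 < 0 := hBlt hw2
    have h0mem : (0:ℝ) ∈ Set.Ioo
        (8*b₁^6 - 12*b₁^3 + 3*(uu τ)^2*b₁^2 + 3 - (uu τ)^3)
        (8*a₁^6 - 12*a₁^3 + 3*(uu τ)^2*a₁^2 + 3 - (uu τ)^3) := ⟨hDsb, hDsa⟩
    obtain ⟨x, hxmem, hDsx⟩ :=
      intermediate_value_Ioo' (le_of_lt hab) (contDs (uu τ)).continuousOn h0mem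
    refine ⟨x, ⟨hxmem, (hDDr x).mpr hDsx⟩, ?_⟩
    -- uniqueness
    have huniq : ∀ v w : ℝ, a₁ < v → v < b₁ → a₁ < w → w < b₁ →
        8*v^6 - 12*v^3 + 3*(uu τ)^2*v^2 + 3 - (uu τ)^3 = 0 →
        8*w^6 - 12*w^3 + 3*(uu τ)^2*w^2 + 3 - (uu τ)^3 = 0 → v < w → False := by
      intro v w hv1 hv2 hw1 hw2' hDv hDw hvw
      obtain ⟨hhv, hv0⟩ := hS hDsb v hv1 hv2 hDv
      obtain ⟨hhw, hw0⟩ := hS hDsb w hw1 hw2' hDw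
      obtain ⟨m, hm, hmder⟩ := Ds_rolle (uu τ) hvw (hDv.trans hDw.symm)
      have hm0 : 0 < m := lt_trans hv0 hm.1
      have hhm : 8*m^4 - 6*m + (uu τ)^2 = 0 := by
        rcases mul_eq_zero.mp hmder with h | h
        · exact absurd h (by positivity)
        · exact h
      obtain ⟨aa, bb, ha0, hb0, hab1, hposab, hineq⟩ :=
        hh_convex_combo (uu τ) (le_of_lt hm.1) (le_of_lt hm.2)
      obtain ⟨haa, hbb⟩ := hposab hm.1 hm.2
      have h1 : aa * (8*v^4 - 6*v + (uu τ)^2) = 0 := by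
        nlinarith [mul_nonpos_of_nonneg_of_nonpos ha0 hhv,
          mul_nonpos_of_nonneg_of_nonpos hb0 hhw]
      have h2 : bb * (8*w^4 - 6*w + (uu τ)^2) = 0 := by
        nlinarith [mul_nonpos_of_nonneg_of_nonpos ha0 hhv,
          mul_nonpos_of_nonneg_of_nonpos hb0 hhw]
      have hhv0 : 8*v^4 - 6*v + (uu τ)^2 = 0 := (mul_eq_zero.mp h1).resolve_left (ne_of_gt haa)
      have hhw0 : 8*w^4 - 6*w + (uu τ)^2 = 0 := (mul_eq_zero.mp h2).resolve_left (ne_of_gt hbb)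
      exact no_two_roots hv0 hvw hhv0 hhw0 hDv hDw
    intro y ⟨hymem, hyDD⟩
    have hDsy : 8*y^6 - 12*y^3 + 3*(uu τ)^2*y^2 + 3 - (uu τ)^3 = 0 := (hDDr y).mp hyDD
    rcases lt_trichotomy y x with h | h | h
    · exact absurd (huniq y x hymem.1 hymem.2 hxmem.1 hxmem.2 hDsy hDsx h) not_false
    · exact h
    · exact absurd (huniq x y hxmem.1 hxmem.2 hymem.1 hymem.2 hDsx hDsy h) not_false
  · -- Part 3 : DD(b₁) = 0 ↔ τ = 1/12
    constructor
    · intro hDb0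
      have hDsb : 8*b₁^6 - 12*b₁^3 + 3*(uu τ)^2*b₁^2 + 3 - (uu τ)^3 = 0 := (hDDr b₁).mp hDb0
      rcases lt_trichotomy ((uu τ)^3) 2 with h | h | h
      · linarith [hBlt h]
      · rw [hu3] at h; linarith
      · linarith [(hBgt h).1]
    · intro ht
      exact (hDDr b₁).mpr (hBeq (by rw [hu3, ht]; norm_num))
  · -- Part 4 : DD(a₁) ≠ 0
    intro hDa0
    have := (hDDr a₁).mp hDa0
    linarith
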